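/- Let α > 0. For every ω ∈ [0, π/2], one has Re[ χ_α(−(1+2iα·sin ω)) + (iπ/4)·(1+2iα·sin ω) ] = α·cos ω + α·(ω − π/2)·sin ω. Moreover, the function ω ↦ α·cos ω + α·(ω − π/2)·sin ω is strictly decreasing on [0, π/2] and vanishes on [0, π/2] only at ω = π/2. -/

import Mathlib

open Complex Real

/-- The principal branch of the complex square root. -/
noncomputable def csqrt (z : ℂ) : ℂ := z ^ (1 / 2 : ℂ)

/-- `χ_α(z) := (1/2)·√(4α²+(1+z)²) + ((1+z)/2)·log(2α/(1+z+√(4α²+(1+z)²)))`,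
with principal branches of square root and logarithm. -/
noncomputable def chi (α : ℝ) (z : ℂ) : ℂ :=
  (1 / 2 : ℂ) * csqrt (4 * (α : ℂ) ^ 2 + (1 + z) ^ 2) +
    (1 + z) / 2 * Complex.log (2 * (α : ℂ) / (1 + z + csqrt (4 * (α : ℂ) ^ 2 + (1 + z) ^ 2)))

lemma csqrt_sq_of_nonneg {x : ℝ} (hx : 0 ≤ x) : csqrt (((x : ℝ) : ℂ) ^ 2) = (x : ℂ) := by
  unfold csqrt
  have h1 : ((x : ℝ) : ℂ) ^ 2 = (((x ^ 2 : ℝ)) : ℂ) := by push_cast; ring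
  rw [h1, show (1/2 : ℂ) = (((1/2 : ℝ)) : ℂ) by norm_num,
      ← Complex.ofReal_cpow (by positivity), ← Real.sqrt_eq_rpow, Real.sqrt_sq hx]

theorem chi_right_side_boundary (α : ℝ) (hα : 0 < α) :
    (∀ ω ∈ Set.Icc (0 : ℝ) (Real.pi / 2),
      (chi α (-(1 + 2 * Complex.I * (α : ℂ) * (Real.sin ω : ℂ))) +
        Complex.I * (Real.pi : ℂ) / 4 * (1 + 2 * Complex.I * (α : ℂ) * (Real.sin ω : ℂ))).re =
        α * Real.cos ω + α * (ω - Real.pi / 2) * Real.sin ω) ∧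
    StrictAntiOn (fun ω : ℝ => α * Real.cos ω + α * (ω - Real.pi / 2) * Real.sin ω)
      (Set.Icc (0 : ℝ) (Real.pi / 2)) ∧
    (∀ ω ∈ Set.Icc (0 : ℝ) (Real.pi / 2),
      (α * Real.cos ω + α * (ω - Real.pi / 2) * Real.sin ω = 0 ↔ ω = Real.pi / 2)) := by
  have hpi := Real.pi_pos
  have hanti : StrictAntiOn (fun ω : ℝ => α * Real.cos ω + α * (ω - Real.pi / 2) * Real.sin ω)
      (Set.Icc (0 : ℝ) (Real.pi / 2)) := by
    apply strictAntiOn_of_deriv_neg (convex_Icc _ _)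
    · fun_prop
    · intro x hx
      rw [interior_Icc] at hx
      have hd : HasDerivAt (fun ω : ℝ => α * Real.cos ω + α * (ω - Real.pi / 2) * Real.sin ω)
          (α * (x - Real.pi / 2) * Real.cos x) x := by
        have h1 := ((Real.hasDerivAt_cos x).const_mul α)
        have h2 := ((((hasDerivAt_id x).sub_const (Real.pi/2)).mul (Real.hasDerivAt_sin x)).const_mul α)
        have h := h1.add h2
        simp only [id_eq] at h
        have h' := h.congr_deriv (show _ = α * (x - Real.pi / 2) * Real.cos x by ring)
        exact h'.congr_of_eventuallyEq
          (Filter.Eventually.of_forall (fun y => by simp only [Pi.add_apply, Pi.mul_apply]; ring))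
      rw [hd.deriv]
      have hc : 0 < Real.cos x := Real.cos_pos_of_mem_Ioo ⟨by linarith [hx.1], hx.2⟩
      have hx2 : x - Real.pi / 2 < 0 := by linarith [hx.2]
      nlinarith [mul_neg_of_pos_of_neg (mul_pos hα hc) hx2]
  refine ⟨?_, hanti, ?_⟩
  · intro ω hω
    obtain ⟨h0, h2⟩ := hω
    set s := Real.sin ω with hs
    set c := Real.cos ω with hc
    have hcnn : 0 ≤ c := Real.cos_nonneg_of_mem_Icc ⟨by linarith, h2⟩
    have hsc : (s : ℂ) ^ 2 + (c : ℂ) ^ 2 = 1 := by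
      have := Real.sin_sq_add_cos_sq ω
      exact_mod_cast this
    set z : ℂ := -(1 + 2 * Complex.I * (α : ℂ) * (s : ℂ)) with hz
    have harg : 4 * (α : ℂ) ^ 2 + (1 + z) ^ 2 = (((2 * α * c : ℝ)) : ℂ) ^ 2 := by
      rw [hz]; push_cast
      linear_combination (-4 * (α:ℂ)^2) * hsc + (4 * (α:ℂ)^2 * (s:ℂ)^2) * Complex.I_sq
    have hsqrt : csqrt (4 * (α : ℂ) ^ 2 + (1 + z) ^ 2) = ((2 * α * c : ℝ) : ℂ) := by
      rw [harg, csqrt_sq_of_nonneg (by positivity)]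
    have hprod : ((c : ℂ) + Complex.I * s) * ((c : ℂ) - Complex.I * s) = 1 := by
      linear_combination hsc - (s:ℂ)^2 * Complex.I_sq
    have hne : (c : ℂ) + Complex.I * s ≠ 0 := by
      intro h
      rw [h, zero_mul] at hprod
      exact one_ne_zero hprod.symm
    have hdiv : 2 * (α : ℂ) / (1 + z + ((2 * α * c : ℝ) : ℂ)) = (c : ℂ) + Complex.I * s := by
      have hden : (1 + z + ((2 * α * c : ℝ) : ℂ)) = 2 * α * ((c : ℂ) - Complex.I * s) := by
        rw [hz]; push_cast; ring
      rw [hden]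
      rw [div_eq_iff]
      · linear_combination (-2 * (α:ℂ)) * hsc + (2 * (α:ℂ) * (s:ℂ)^2) * Complex.I_sq
      · intro h
        have h2α : (2 * (α:ℂ)) = ((c : ℂ) + Complex.I * s) * (2 * α * ((c : ℂ) - Complex.I * s)) := by
          linear_combination (-2 * (α:ℂ)) * hsc + (2 * (α:ℂ) * (s:ℂ)^2) * Complex.I_sq
        rw [h, mul_zero] at h2α
        simp at h2α
        exact hα.ne' h2α
    have hexp : (c : ℂ) + Complex.I * s = Complex.exp ((ω : ℂ) * Complex.I) := by
      rw [Complex.exp_mul_I, hs, hc]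
      push_cast [Complex.ofReal_cos, Complex.ofReal_sin]
      ring
    have hlog : Complex.log ((c : ℂ) + Complex.I * s) = (ω : ℂ) * Complex.I := by
      rw [hexp, Complex.log_exp] <;> simp <;> linarith
    have key : chi α z + Complex.I * (Real.pi : ℂ) / 4 * (1 + 2 * Complex.I * (α : ℂ) * (s : ℂ))
        = ((α * c + α * (ω - Real.pi / 2) * s : ℝ) : ℂ) + ((Real.pi / 4 : ℝ) : ℂ) * Complex.I := by
      rw [chi, hsqrt, hdiv, hlog, hz]
      push_cast
      linear_combination ((α:ℂ) * (Real.pi:ℂ) * (s:ℂ) / 2 - (ω:ℂ) * (α:ℂ) * (s:ℂ)) * Complex.I_sq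
    rw [key]
    simp
  · intro ω hω
    have hend : α * Real.cos (Real.pi / 2) + α * (Real.pi / 2 - Real.pi / 2) * Real.sin (Real.pi / 2) = 0 := by
      simp
    constructor
    · intro h
      by_contra hne
      have hlt : ω < Real.pi / 2 := lt_of_le_of_ne hω.2 hne
      have := hanti hω (Set.right_mem_Icc.mpr (by linarith)) hlt
      simp only at this
      linarith [hend]
    · intro h; rw [h]; exact hend
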